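/- There is no function f : Ĩ → ℝ such that (i) f is continuous with respect to the subspace topology that Ĩ inherits from ℝ², (ii) f is injective (for all α, β ∈ Ĩ with α ≠ β, f(α) ≠ f(β)), and (iii) f is increasing under Atanassov's partial order (for all α, β ∈ Ĩ, α ⊂ β implies f(α) ≤ f(β)). -/
import Mathlib


/-- The set of intuitionistic fuzzy values (IFVs): pairs `⟨μ, ν⟩` with
`μ, ν ∈ [0,1]` and `μ + ν ≤ 1`, viewed as a subset of `ℝ × ℝ`. -/
def Itilde : Set (ℝ × ℝ) :=
  {p | 0 ≤ p.1 ∧ p.1 ≤ 1 ∧ 0 ≤ p.2 ∧ p.2 ≤ 1 ∧ p.1 + p.2 ≤ 1}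

/-- Atanassov's partial order on IFVs: `α ⊂ β` iff `μ_α ≤ μ_β` and `ν_α ≥ ν_β`. -/
def atanassovLE (a b : ℝ × ℝ) : Prop := a.1 ≤ b.1 ∧ b.2 ≤ a.2

/-- First path: from (0,1/2) through (0,0) to (1/2,0). -/
noncomputable def gamma1 (t : ℝ) : ℝ × ℝ :=
  (min (max (t - 1/2) 0) (1/2), min (max (1/2 - t) 0) (1/2))

/-- Second path: from (0,1/2) through (1/2,1/2) to (1/2,0). -/
noncomputable def gamma2 (t : ℝ) : ℝ × ℝ :=
  (min (max t 0) (1/2), min (max (1 - t) 0) (1/2))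

lemma gamma1_mem (t : ℝ) : gamma1 t ∈ Itilde := by
  refine ⟨le_min (le_max_right _ _) (by norm_num),
    (min_le_right _ _).trans (by norm_num),
    le_min (le_max_right _ _) (by norm_num),
    (min_le_right _ _).trans (by norm_num), ?_⟩
  have := min_le_right (max (t - 1/2) 0) (1/2 : ℝ)
  have := min_le_right (max (1/2 - t) 0) (1/2 : ℝ)
  unfold gamma1
  dsimp only
  linarith

lemma gamma2_mem (t : ℝ) : gamma2 t ∈ Itilde := by
  refine ⟨le_min (le_max_right _ _) (by norm_num),
    (min_le_right _ _).trans (by norm_num),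
    le_min (le_max_right _ _) (by norm_num),
    (min_le_right _ _).trans (by norm_num), ?_⟩
  have := min_le_right (max t 0) (1/2 : ℝ)
  have := min_le_right (max (1 - t) 0) (1/2 : ℝ)
  unfold gamma2
  dsimp only
  linarith

lemma gamma1_cont : Continuous gamma1 := by
  unfold gamma1; fun_prop

lemma gamma2_cont : Continuous gamma2 := by
  unfold gamma2; fun_prop

lemma gamma1_mono {s t : ℝ} (h : s ≤ t) : atanassovLE (gamma1 s) (gamma1 t) := by
  unfold gamma1 atanassovLE
  constructor <;> dsimp <;>
    exact min_le_min (max_le_max (by linarith) le_rfl) le_rfl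

lemma gamma2_mono {s t : ℝ} (h : s ≤ t) : atanassovLE (gamma2 s) (gamma2 t) := by
  unfold gamma2 atanassovLE
  constructor <;> dsimp <;>
    exact min_le_min (max_le_max (by linarith) le_rfl) le_rfl

theorem no_continuous_injective_increasing_score_function :
    ¬ ∃ f : Itilde → ℝ,
        Continuous f ∧
        Function.Injective f ∧
        (∀ a b : Itilde, atanassovLE (a : ℝ × ℝ) (b : ℝ × ℝ) → f a ≤ f b) := by
  rintro ⟨f, hc, hi, hm⟩
  set A : Itilde := ⟨(0, 1/2), by norm_num [Itilde]⟩ with hA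
  set B : Itilde := ⟨(1/2, 0), by norm_num [Itilde]⟩ with hB
  have hAB : f A < f B := by
    have hle : f A ≤ f B := hm A B ⟨by norm_num, by norm_num⟩
    have hne : A ≠ B := by
      intro h
      have := congrArg (fun x : Itilde => (x : ℝ × ℝ).1) h
      norm_num at this
    exact lt_of_le_of_ne hle fun h => hne (hi h)
  set m : ℝ := (f A + f B) / 2 with hmdef
  have hm1 : f A < m := by rw [hmdef]; linarith
  have hm2 : m < f B := by rw [hmdef]; linarith
  set g1 : ℝ → Itilde := fun t => ⟨gamma1 t, gamma1_mem t⟩ with hg1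
  set g2 : ℝ → Itilde := fun t => ⟨gamma2 t, gamma2_mem t⟩ with hg2
  have hg1c : Continuous (f ∘ g1) :=
    hc.comp (Continuous.subtype_mk gamma1_cont _)
  have hg2c : Continuous (f ∘ g2) :=
    hc.comp (Continuous.subtype_mk gamma2_cont _)
  have hg10 : g1 0 = A := by
    apply Subtype.ext; show gamma1 0 = ((0 : ℝ), (1/2 : ℝ)); unfold gamma1; norm_num
  have hg11 : g1 1 = B := by
    apply Subtype.ext; show gamma1 1 = ((1/2 : ℝ), (0 : ℝ)); unfold gamma1; norm_num
  have hg20 : g2 0 = A := by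
    apply Subtype.ext; show gamma2 0 = ((0 : ℝ), (1/2 : ℝ)); unfold gamma2; norm_num
  have hg21 : g2 1 = B := by
    apply Subtype.ext; show gamma2 1 = ((1/2 : ℝ), (0 : ℝ)); unfold gamma2; norm_num
  have ivt1 : m ∈ (f ∘ g1) '' Set.Icc (0:ℝ) 1 := by
    apply intermediate_value_Icc (by norm_num) hg1c.continuousOn
    simp only [Function.comp_apply, hg10, hg11]
    exact ⟨hm1.le, hm2.le⟩
  have ivt2 : m ∈ (f ∘ g2) '' Set.Icc (0:ℝ) 1 := by
    apply intermediate_value_Icc (by norm_num) hg2c.continuousOn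
    simp only [Function.comp_apply, hg20, hg21]
    exact ⟨hm1.le, hm2.le⟩
  obtain ⟨t1, ht1, hft1⟩ := ivt1
  obtain ⟨t2, ht2, hft2⟩ := ivt2
  simp only [Function.comp_apply] at hft1 hft2
  have heq : g1 t1 = g2 t2 := hi (hft1.trans hft2.symm)
  have h1 : (gamma1 t1).1 = 0 ∨ (gamma1 t1).2 = 0 := by
    rcases le_total t1 (1/2 : ℝ) with h | h
    · left; unfold gamma1; dsimp only
      rw [max_eq_right (by linarith : t1 - 1/2 ≤ 0), min_eq_left (by norm_num)]
    · right; unfold gamma1; dsimp only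
      rw [max_eq_right (by linarith : 1/2 - t1 ≤ 0), min_eq_left (by norm_num)]
  have h2 : (gamma2 t2).1 = 1/2 ∨ (gamma2 t2).2 = 1/2 := by
    rcases le_total t2 (1/2 : ℝ) with h | h
    · right; unfold gamma2; dsimp only
      rw [max_eq_left (by linarith : (0:ℝ) ≤ 1 - t2),
        min_eq_right (by linarith : (1/2:ℝ) ≤ 1 - t2)]
    · left; unfold gamma2; dsimp only
      rw [max_eq_left (by linarith : (0:ℝ) ≤ t2),
        min_eq_right (by linarith : (1/2:ℝ) ≤ t2)]
  have hcoord : gamma1 t1 = gamma2 t2 := congrArg Subtype.val heq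
  rw [hcoord] at h1
  rcases h1 with h1 | h1 <;> rcases h2 with h2 | h2
  · rw [h1] at h2; norm_num at h2
  · -- point = A : contradiction with f A < m
    have hpA : gamma2 t2 = ((0 : ℝ), (1/2 : ℝ)) := Prod.ext_iff.mpr ⟨h1, h2⟩
    have : g2 t2 = A := Subtype.ext hpA
    rw [this] at hft2
    linarith
  · -- point = B : contradiction with m < f B
    have hpB : gamma2 t2 = ((1/2 : ℝ), (0 : ℝ)) := Prod.ext_iff.mpr ⟨h2, h1⟩
    have : g2 t2 = B := Subtype.ext hpB
    rw [this] at hft2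
    linarith
  · rw [h2] at h1; norm_num at h1
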